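/- Let Ω₁, …, Ωₙ be nonempty closed convex sets with empty intersection in a Hilbert space X, and let x̄ minimize D(x) = max_i d(x, Ωᵢ) with r = D(x̄). Then the active index set I(x̄) = {i : d(x̄, Ωᵢ) = r} contains at least two indices, and for each i ∈ I(x̄), the intersection B̄(x̄; r) ∩ Ωᵢ is a singleton. -/

import Mathlib

lemma exists_proj_aux {X : Type*} [NormedAddCommGroup X] [InnerProductSpace ℝ X]
    [CompleteSpace X] {s : Set X} (hne : s.Nonempty) (hcl : IsClosed s)
    (hco : Convex ℝ s) (x : X) : ∃ p ∈ s, dist x p = Metric.infDist x s := by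
  obtain ⟨p, hp, hnorm⟩ := exists_norm_eq_iInf_of_complete_convex hne
    hcl.isComplete hco x
  refine ⟨p, hp, ?_⟩
  rw [Metric.infDist_eq_iInf, dist_eq_norm, hnorm]
  congr 1
  ext w
  rw [dist_eq_norm]

/-- A smallest intersecting ball in a Hilbert space touches at least two of the
target sets: the active index set has at least two elements, and for each active
index the intersection of the smallest ball with the corresponding set is a
singleton. -/
theorem smallest_ball_touches_two_sets
    {X : Type*} [NormedAddCommGroup X] [InnerProductSpace ℝ X] [CompleteSpace X]
    (n : ℕ) (hn : 1 < n) (Ω : Fin n → Set X)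
    (hne : ∀ i, (Ω i).Nonempty) (hcl : ∀ i, IsClosed (Ω i))
    (hco : ∀ i, Convex ℝ (Ω i)) (hint : (⋂ i, Ω i) = ∅)
    (D : X → ℝ)
    (hD : D = fun x => Finset.univ.sup' (Finset.univ_nonempty_iff.2 ⟨⟨0, by omega⟩⟩)
      fun i => Metric.infDist x (Ω i))
    (xbar : X) (hmin : IsMinOn D Set.univ xbar)
    (r : ℝ) (hr : r = D xbar) :
    (∃ i j : Fin n, i ≠ j ∧ Metric.infDist xbar (Ω i) = r ∧
        Metric.infDist xbar (Ω j) = r) ∧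
      ∀ i : Fin n, Metric.infDist xbar (Ω i) = r →
        ∃ p : X, Metric.closedBall xbar r ∩ Ω i = {p} := by
  have hnn : (Finset.univ : Finset (Fin n)).Nonempty :=
    Finset.univ_nonempty_iff.2 ⟨⟨0, by omega⟩⟩
  have hle : ∀ i, Metric.infDist xbar (Ω i) ≤ r := by
    intro i
    rw [hr, hD]
    exact Finset.le_sup' (fun i => Metric.infDist xbar (Ω i)) (Finset.mem_univ i)
  -- r > 0
  have hr0 : 0 < r := by
    rcases lt_or_eq_of_le (Metric.infDist_nonneg.trans (hle ⟨0, by omega⟩)) with h | h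
    · exact h
    · exfalso
      have hx : xbar ∈ ⋂ i, Ω i := by
        refine Set.mem_iInter.2 fun i => ?_
        have h0 : Metric.infDist xbar (Ω i) = 0 :=
          le_antisymm (h ▸ hle i) Metric.infDist_nonneg
        exact ((hcl i).mem_iff_infDist_zero (hne i)).2 h0
      rw [hint] at hx
      exact hx
  -- Part 2
  have part2 : ∀ i : Fin n, Metric.infDist xbar (Ω i) = r →
      ∃ p : X, Metric.closedBall xbar r ∩ Ω i = {p} := by
    intro i hi
    obtain ⟨p, hpΩ, hpd⟩ := exists_proj_aux (hne i) (hcl i) (hco i) xbar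
    rw [hi] at hpd
    refine ⟨p, Set.eq_singleton_iff_unique_mem.2
      ⟨⟨Metric.mem_closedBall.2 (by rw [dist_comm]; exact hpd.le), hpΩ⟩, ?_⟩⟩
    rintro q ⟨hqb, hqΩ⟩
    have hqd : dist xbar q = r :=
      le_antisymm (by simpa [dist_comm] using Metric.mem_closedBall.1 hqb)
        (hi ▸ Metric.infDist_le_dist_of_mem hqΩ)
    by_contra hqp
    set m := (1/2 : ℝ) • p + (1/2 : ℝ) • q with hm_def
    have hmΩ : m ∈ Ω i := (hco i) hpΩ hqΩ (by norm_num) (by norm_num) (by norm_num)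
    have hpar := parallelogram_law_with_norm ℝ (xbar - p) (xbar - q)
    have h1 : xbar - p + (xbar - q) = (2 : ℝ) • (xbar - m) := by
      rw [hm_def]; module
    have h2 : xbar - p - (xbar - q) = q - p := by abel
    rw [h1, h2] at hpar
    have hnp : ‖xbar - p‖ = r := by rw [← dist_eq_norm]; exact hpd
    have hnq : ‖xbar - q‖ = r := by rw [← dist_eq_norm]; exact hqd
    have hqp' : (0 : ℝ) < ‖q - p‖ := by
      rw [norm_pos_iff, sub_ne_zero]; exact fun h => hqp h
    have h2m : ‖(2 : ℝ) • (xbar - m)‖ = 2 * ‖xbar - m‖ := by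
      rw [norm_smul]; simp
    have hmlt : ‖xbar - m‖ < r := by
      nlinarith [norm_nonneg (xbar - m), hpar, hnp, hnq, hqp', h2m]
    have : r ≤ dist xbar m := hi ▸ Metric.infDist_le_dist_of_mem hmΩ
    rw [dist_eq_norm] at this
    linarith
  refine ⟨?_, part2⟩
  -- Part 1: at least two active indices
  obtain ⟨i₀, -, hi₀⟩ := Finset.exists_mem_eq_sup' hnn
    (fun i => Metric.infDist xbar (Ω i))
  have hi₀r : Metric.infDist xbar (Ω i₀) = r := by rw [hr, hD]; exact hi₀.symm
  by_contra hcon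
  push_neg at hcon
  have hlt : ∀ j, j ≠ i₀ → Metric.infDist xbar (Ω j) < r := fun j hj =>
    lt_of_le_of_ne (hle j) (hcon i₀ j (Ne.symm hj) hi₀r)
  obtain ⟨p, hpΩ, hpd⟩ := exists_proj_aux (hne i₀) (hcl i₀) (hco i₀) xbar
  rw [hi₀r] at hpd
  -- pick t
  set F := Finset.univ.erase i₀ with hF_def
  have hF : F.Nonempty := by
    haveI : Nontrivial (Fin n) := Fin.nontrivial_iff_two_le.2 hn
    obtain ⟨j, hj⟩ := exists_ne i₀
    exact ⟨j, Finset.mem_erase.2 ⟨hj, Finset.mem_univ j⟩⟩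
  set s := F.sup' hF (fun j => Metric.infDist xbar (Ω j)) with hs_def
  have hsr : s < r := by
    rw [hs_def]
    exact Finset.sup'_lt_iff hF |>.2 fun j hj => hlt j (Finset.mem_erase.1 hj).1
  set δ := r - s with hδ_def
  have hδ : 0 < δ := by simp [hδ_def]; linarith
  set t := min (δ / (2 * r)) (1 / 2) with ht_def
  have ht0 : 0 < t := lt_min (div_pos hδ (by linarith)) (by norm_num)
  have ht1 : t < 1 := lt_of_le_of_lt (min_le_right _ _) (by norm_num)
  have htr : t * r < δ := by
    have h1 : t ≤ δ / (2 * r) := min_le_left _ _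
    have h2 : t * r ≤ δ / 2 := by
      calc t * r ≤ δ / (2 * r) * r := by nlinarith
        _ = δ / 2 := by field_simp
    linarith
  set y := xbar + t • (p - xbar) with hy_def
  have hdyx : dist y xbar = t * r := by
    rw [hy_def, dist_eq_norm]
    simp only [add_sub_cancel_left, norm_smul, Real.norm_eq_abs, abs_of_pos ht0]
    congr 1
    rw [norm_sub_rev, ← dist_eq_norm]
    exact hpd
  have hDy : D y < r := by
    rw [hD]
    refine Finset.sup'_lt_iff hnn |>.2 fun i _ => ?_
    by_cases hi : i = i₀
    · subst hi
      calc Metric.infDist y (Ω i) ≤ dist y p := Metric.infDist_le_dist_of_mem hpΩ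
        _ = (1 - t) * r := by
            rw [hy_def, dist_eq_norm]
            have : xbar + t • (p - xbar) - p = (1 - t) • (xbar - p) := by module
            rw [this, norm_smul, Real.norm_eq_abs, abs_of_pos (by linarith),
              ← dist_eq_norm, hpd]
        _ < r := by nlinarith
    · calc Metric.infDist y (Ω i)
          ≤ Metric.infDist xbar (Ω i) + dist y xbar :=
            Metric.infDist_le_infDist_add_dist
        _ = Metric.infDist xbar (Ω i) + t * r := by rw [hdyx]
        _ < Metric.infDist xbar (Ω i) + δ := by linarith
        _ ≤ s + δ := by
            have : Metric.infDist xbar (Ω i) ≤ s := by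
              rw [hs_def]
              exact Finset.le_sup' (fun j => Metric.infDist xbar (Ω j))
                (Finset.mem_erase.2 ⟨hi, Finset.mem_univ i⟩)
            linarith
        _ = r := by rw [hδ_def]; ring
  have := hmin (Set.mem_univ y)
  rw [← hr] at this
  simp only [Set.mem_setOf_eq] at this
  linarith
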